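/- Let n have shift orbit of cardinality d and j, l ∈ ℤ. The operator Z^{l−j} restricted to span(E_n) is non-degenerate (i.e., the values ω^{(l−j)μ(n')} for n' ∈ E_n are pairwise distinct) if and only if gcd((l−j)·|n|·d/M, d) = 1. -/

import Mathlib

open Finset

noncomputable section

/-- Total photon number `|n|`. -/
def totalPhotons {M : ℕ} (n : Fin M → ℕ) : ℕ := ∑ m : Fin M, n m

/-- Clock label `μ(n) = Σ m·n(m)`. -/
def clockLabel {M : ℕ} (n : Fin M → ℕ) : ℕ := ∑ m : Fin M, (m : ℕ) * n m

/-- `ω = exp(2πi/M)`. -/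
def omegaM (M : ℕ) : ℂ := Complex.exp (2 * Real.pi * Complex.I / M)

/-- The Fock space over `M` modes: amplitudes on occupation vectors. -/
abbrev Fock (M : ℕ) := (Fin M → ℕ) → ℂ

/-- Mode-shift operator: `X |n⟩ = |X·n⟩` with `(X·n)(m) = n(m−1)` mod `M`. -/
def fockX {M : ℕ} [NeZero M] (f : Fock M) : Fock M := fun v => f (fun m => v (m + 1))

/-- Phase-shift operator: `Z |n⟩ = ω^{μ(n)} |n⟩`. -/
def fockZ {M : ℕ} (f : Fock M) : Fock M := fun v => omegaM M ^ clockLabel v * f v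

/-- Fock basis state `|n⟩`. -/
def fockDelta {M : ℕ} (n : Fin M → ℕ) : Fock M := fun v => if v = n then 1 else 0

/-- Cyclic mode shift on occupation vectors: `(X·n)(m) = n(m-1)` mod `M`. -/
def modeShift {M : ℕ} [NeZero M] (n : Fin M → ℕ) : Fin M → ℕ := fun m => n (m - 1)

lemma totalPhotons_modeShift {M : ℕ} [NeZero M] (n : Fin M → ℕ) :
    totalPhotons (modeShift n) = totalPhotons n := by
  unfold totalPhotons modeShift
  exact Fintype.sum_equiv (Equiv.subRight (1 : Fin M)) _ _ (fun x => rfl)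

lemma totalPhotons_modeShift_iter {M : ℕ} [NeZero M] (n : Fin M → ℕ) (k : ℕ) :
    totalPhotons (modeShift^[k] n) = totalPhotons n := by
  induction k with
  | zero => rfl
  | succ k ih => rw [Function.iterate_succ_apply', totalPhotons_modeShift, ih]

lemma finval_add_one {M : ℕ} [NeZero M] (m : Fin M) :
    (((m + 1 : Fin M) : ℕ) : ZMod M) = ((m : ℕ) : ZMod M) + 1 := by
  rw [Fin.val_add, Fin.val_one', ZMod.natCast_mod, Nat.cast_add, ZMod.natCast_mod,
    Nat.cast_one]

lemma clockLabel_modeShift {M : ℕ} [NeZero M] (n : Fin M → ℕ) :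
    ((clockLabel (modeShift n) : ℕ) : ZMod M)
      = ((clockLabel n : ℕ) : ZMod M) + ((totalPhotons n : ℕ) : ZMod M) := by
  have h : clockLabel (modeShift n) = ∑ m : Fin M, ((m + 1 : Fin M) : ℕ) * n m := by
    unfold clockLabel modeShift
    exact Fintype.sum_equiv (Equiv.subRight (1 : Fin M)) _ _
      (fun x => by simp)
  rw [h]
  unfold clockLabel totalPhotons
  push_cast
  rw [← Finset.sum_add_distrib]
  refine Finset.sum_congr rfl (fun m _ => ?_)
  rw [finval_add_one]
  ring

lemma clockLabel_modeShift_iter {M : ℕ} [NeZero M] (n : Fin M → ℕ) (k : ℕ) :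
    ((clockLabel (modeShift^[k] n) : ℕ) : ZMod M)
      = ((clockLabel n : ℕ) : ZMod M) + (k : ZMod M) * ((totalPhotons n : ℕ) : ZMod M) := by
  induction k with
  | zero => simp
  | succ k ih =>
      rw [Function.iterate_succ_apply', clockLabel_modeShift,
        totalPhotons_modeShift_iter, ih]
      push_cast
      ring

lemma omega_zpow_eq_iff {M : ℕ} [NeZero M] (a b : ℤ) :
    omegaM M ^ a = omegaM M ^ b ↔ ((a : ZMod M) = (b : ZMod M)) := by
  have hprim : IsPrimitiveRoot (omegaM M) M :=
    Complex.isPrimitiveRoot_exp M (NeZero.ne M)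
  have hne : omegaM M ≠ 0 := Complex.exp_ne_zero _
  have h1 : omegaM M ^ (a - b) = 1 ↔ (M : ℤ) ∣ (a - b) :=
    hprim.zpow_eq_one_iff_dvd _
  rw [zpow_sub₀ hne, div_eq_one_iff_eq (zpow_ne_zero _ hne)] at h1
  rw [h1, ZMod.intCast_eq_intCast_iff, Int.modEq_iff_dvd]
  exact dvd_sub_comm

lemma key_arith (e : ℤ) (N d M t : ℕ) (hM : 0 < M) (hd : 0 < d) (ht : N * d = M * t) :
    (∀ k k' : ℕ, k < d → k' < d → (M : ℤ) ∣ e * ((k : ℤ) - (k' : ℤ)) * (N : ℤ) → k = k') ↔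
      Int.gcd (e * (t : ℤ)) (d : ℤ) = 1 := by
  have htZ : (N : ℤ) * d = (M : ℤ) * t := by exact_mod_cast ht
  have hstep : ∀ x : ℤ, ((M : ℤ) ∣ x * N ↔ (d : ℤ) ∣ x * t) := by
    intro x
    have hd0 : (d : ℤ) ≠ 0 := by exact_mod_cast hd.ne'
    have hM0 : (M : ℤ) ≠ 0 := by exact_mod_cast hM.ne'
    rw [← mul_dvd_mul_iff_right hd0 (a := (M : ℤ)) (b := x * N)]
    rw [show x * (N : ℤ) * d = (M : ℤ) * (x * t) by
      calc x * (N : ℤ) * d = x * ((N : ℤ) * d) := by ring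
        _ = x * ((M : ℤ) * t) := by rw [htZ]
        _ = (M : ℤ) * (x * t) := by ring]
    exact mul_dvd_mul_iff_left hM0
  constructor
  · intro h
    by_contra hg
    set g := Int.gcd (e * (t : ℤ)) (d : ℤ) with hgdef
    have hgdZ : ((g : ℕ) : ℤ) ∣ (d : ℤ) := by rw [hgdef]; exact Int.gcd_dvd_right _ _
    have hgd : g ∣ d := by exact_mod_cast hgdZ
    have hg0 : 0 < g := by
      rcases Nat.eq_zero_or_pos g with h0 | h0
      · exfalso
        rw [hgdef] at h0
        have hd0 : (d : ℤ) = 0 := (Int.gcd_eq_zero_iff.mp h0).2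
        omega
      · exact h0
    have hg2 : 2 ≤ g := by omega
    set k := d / g with hkdef
    have hk0 : 0 < k := Nat.div_pos (Nat.le_of_dvd hd hgd) hg0
    have hkd : k < d := Nat.div_lt_self hd hg2
    have hsL : ((g : ℕ) : ℤ) ∣ e * (t : ℤ) := by rw [hgdef]; exact Int.gcd_dvd_left _ _
    obtain ⟨s, hs⟩ := hsL
    have hgk : g * k = d := Nat.mul_div_cancel' hgd
    have hdvd : (d : ℤ) ∣ e * ((k : ℤ) - (0 : ℕ)) * t := by
      refine ⟨s, ?_⟩
      have hgkZ : (g : ℤ) * k = d := by exact_mod_cast hgk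
      calc e * ((k : ℤ) - (0 : ℕ)) * t = (e * t) * k := by push_cast; ring
        _ = ((g : ℤ) * s) * k := by rw [hs]
        _ = ((g : ℤ) * k) * s := by ring
        _ = (d : ℤ) * s := by rw [hgkZ]
    have := h k 0 hkd hd ((hstep _).mpr hdvd)
    omega
  · intro hg k k' hk hk' hdvd
    have hco : IsCoprime (e * (t : ℤ)) (d : ℤ) := Int.isCoprime_iff_gcd_eq_one.mpr hg
    have h2 : (d : ℤ) ∣ e * ((k : ℤ) - k') * t := (hstep _).mp hdvd
    have h3 : (d : ℤ) ∣ ((k : ℤ) - k') := by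
      have h4 : (d : ℤ) ∣ (e * (t : ℤ)) * ((k : ℤ) - k') := by
        rw [show (e * (t : ℤ)) * ((k : ℤ) - k') = e * ((k : ℤ) - k') * t by ring]
        exact h2
      exact hco.symm.dvd_of_dvd_mul_left h4
    have h5 : (k : ℤ) - k' = 0 := by
      refine Int.eq_zero_of_dvd_of_natAbs_lt_natAbs h3 ?_
      omega
    omega

/-- the operator `Z^{l−j}` restricted to the Pauli subspace `span(E_n)`
(orbit of cardinality `d`) is non-degenerate — i.e. the eigenvalues `ω^{(l−j)μ(n')}` for
`n' ∈ E_n` are pairwise distinct — if and only if `gcd((l−j)·|n|·d/M, d) = 1`. -/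
theorem zpow_nondegenerate_iff (M : ℕ) [NeZero M] (j l : ℤ) (n : Fin M → ℕ) (d : ℕ)
    (hd : 0 < d) (hfix : modeShift^[d] n = n)
    (hmin : ∀ k, 0 < k → k < d → modeShift^[k] n ≠ n) (hdM : d ∣ M) :
    (∀ k k' : ℕ, k < d → k' < d →
        omegaM M ^ ((l - j) * (clockLabel (modeShift^[k] n) : ℤ))
          = omegaM M ^ ((l - j) * (clockLabel (modeShift^[k'] n) : ℤ)) → k = k') ↔
      Int.gcd ((l - j) * ((totalPhotons n * d / M : ℕ) : ℤ)) (d : ℤ) = 1 := by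
  have hM : 0 < M := Nat.pos_of_ne_zero (NeZero.ne M)
  set e := l - j with he
  set N := totalPhotons n with hNdef
  have hMdN : M ∣ N * d := by
    have h1 := clockLabel_modeShift_iter (M := M) n d
    rw [hfix] at h1
    have h2 : ((d : ZMod M)) * ((N : ℕ) : ZMod M) = 0 := (left_eq_add.mp h1).symm ▸ rfl
    have h3 : (((N * d : ℕ)) : ZMod M) = 0 := by
      push_cast
      rw [mul_comm]
      exact (left_eq_add.mp h1)
    exact (ZMod.natCast_eq_zero_iff _ _).mp h3
  set t := N * d / M with htdef
  have ht : N * d = M * t := (Nat.mul_div_cancel' hMdN).symm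
  have hiff : ∀ k k' : ℕ,
      (omegaM M ^ (e * (clockLabel (modeShift^[k] n) : ℤ))
        = omegaM M ^ (e * (clockLabel (modeShift^[k'] n) : ℤ)))
        ↔ (M : ℤ) ∣ e * ((k : ℤ) - (k' : ℤ)) * (N : ℤ) := by
    intro k k'
    rw [omega_zpow_eq_iff, ← ZMod.intCast_zmod_eq_zero_iff_dvd]
    push_cast
    rw [clockLabel_modeShift_iter, clockLabel_modeShift_iter]
    constructor
    · intro h
      linear_combination h
    · intro h
      linear_combination h
  rw [← key_arith e N d M t hM hd ht]
  constructor
  · intro H k k' hk hk' hdvd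
    exact H k k' hk hk' ((hiff k k').mpr hdvd)
  · intro H k k' hk hk' heq
    exact H k k' hk hk' ((hiff k k').mp heq)
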